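/- A nondegenerate linear code C with generator matrix G over F_q is minimal if and only if the multiset of columns of G, viewed as points of the projective space PG(k-1,q), forms a strong blocking set, i.e., for every hyperplane H of PG(k-1,q), the set of these points lying in H spans H. -/

import Mathlib

open Matrix

/-- The support of a vector: the set of coordinates where it is nonzero. -/
def codeSupp {F : Type*} [Zero F] {n : ℕ} (x : Fin n → F) : Set (Fin n) :=
  {i | x i ≠ 0}

/-- A linear code is minimal if no nonzero codeword has its support strictly
containing the support of another nonzero codeword. -/
def IsMinimalCode {F : Type*} [Field F] {n : ℕ} (C : Submodule F (Fin n → F)) : Prop :=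
  ∀ c ∈ C, c ≠ 0 → ∀ c' ∈ C, c' ≠ 0 → ¬ codeSupp c' ⊂ codeSupp c

/-- The linear functional `v ↦ ∑ i, x i * v i`. -/
def dotL {F : Type*} [Field F] {k : ℕ} (x : Fin k → F) : (Fin k → F) →ₗ[F] F where
  toFun v := ∑ i, x i * v i
  map_add' u v := by simp [mul_add, Finset.sum_add_distrib]
  map_smul' c v := by
    simp only [Pi.smul_apply, smul_eq_mul, RingHom.id_apply, Finset.mul_sum]
    exact Finset.sum_congr rfl fun i _ => by ring

lemma dotL_apply {F : Type*} [Field F] {k : ℕ} (x v : Fin k → F) :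
    dotL x v = ∑ i, x i * v i := rfl

lemma dotL_basis {F : Type*} [Field F] [DecidableEq F] {k : ℕ} (x : Fin k → F) (i₀ : Fin k) :
    dotL x (fun j => if i₀ = j then (1 : F) else 0) = x i₀ := by
  rw [dotL_apply, Finset.sum_eq_single i₀]
  · simp
  · intro b _ hb; simp [Ne.symm hb]
  · simp

lemma dotL_eq_of_dual {F : Type*} [Field F] {k : ℕ} (φ : (Fin k → F) →ₗ[F] F) :
    dotL (fun i => φ (fun j => if i = j then 1 else 0)) = φ := by
  refine LinearMap.ext fun v => ?_
  rw [dotL_apply, LinearMap.pi_apply_eq_sum_univ φ v]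
  exact Finset.sum_congr rfl fun i _ => by rw [smul_eq_mul, mul_comm]

lemma finrank_ker_dotL {F : Type*} [Field F] [DecidableEq F] {k : ℕ} {x : Fin k → F}
    (hx : x ≠ 0) : Module.finrank F (LinearMap.ker (dotL x)) = k - 1 := by
  have hne : dotL x ≠ 0 := by
    intro h
    apply hx
    funext i₀
    have := dotL_basis x i₀
    rw [h] at this
    simpa using this.symm
  have hrange : Module.finrank F (LinearMap.range (dotL x)) = 1 := by
    have hle : Module.finrank F (LinearMap.range (dotL x)) ≤ 1 := by
      simpa using Submodule.finrank_le (LinearMap.range (dotL x))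
    obtain ⟨v, hv⟩ : ∃ v, dotL x v ≠ 0 := by
      by_contra h
      push_neg at h
      exact hne (LinearMap.ext fun v => by simpa using h v)
    have hbot : LinearMap.range (dotL x) ≠ ⊥ := by
      intro h
      have hm : dotL x v ∈ (⊥ : Submodule F F) := h ▸ LinearMap.mem_range_self _ v
      exact hv (by simpa using hm)
    have hpos : Module.finrank F (LinearMap.range (dotL x)) ≠ 0 := fun h =>
      hbot (Submodule.finrank_eq_zero.mp h)
    omega
  have := LinearMap.finrank_range_add_finrank_ker (dotL x)
  rw [hrange, Module.finrank_fin_fun] at this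
  omega

/-- any proper subspace is contained in the kernel of a `dotL x` with `x ≠ 0`. -/
lemma exists_dotL_ker {F : Type*} [Field F] {k : ℕ} {U : Submodule F (Fin k → F)}
    (hU : U < ⊤) : ∃ x : Fin k → F, x ≠ 0 ∧ U ≤ LinearMap.ker (dotL x) := by
  obtain ⟨φ, hφ0, hφ⟩ := U.exists_dual_map_eq_bot_of_lt_top hU inferInstance
  refine ⟨fun i => φ (fun j => if i = j then 1 else 0), ?_, ?_⟩
  · intro h
    apply hφ0
    have := dotL_eq_of_dual φ
    rw [h] at this
    rw [← this]
    ext v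
    simp [dotL_apply]
  · intro v hv
    rw [LinearMap.mem_ker]
    have : dotL (fun i => φ (fun j => if i = j then 1 else 0)) v = φ v := by
      rw [dotL_eq_of_dual φ]
    rw [this]
    have : φ v ∈ U.map φ := Submodule.mem_map_of_mem hv
    rwa [hφ, Submodule.mem_bot] at this

/-- A nondegenerate code (row span of a full-rank generator matrix `G` with no
zero column) is minimal if and only if the columns of `G`, viewed as points of
the projective space `PG(k-1,q)` (equivalently, nonzero vectors of `F_q^k` up
to collinearity), form a strong blocking set: for every hyperplane `W` (a
`(k-1)`-dimensional subspace of `F_q^k`), the columns lying in `W` span `W`. -/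
theorem minimal_iff_strongBlockingSet {F : Type*} [Field F] [Fintype F] [DecidableEq F]
    {k n : ℕ} (G : Matrix (Fin k) (Fin n) F)
    (hrank : G.rank = k) (hnondeg : ∀ j : Fin n, Gᵀ j ≠ 0) :
    IsMinimalCode (LinearMap.range G.vecMulLinear) ↔
      ∀ W : Submodule F (Fin k → F), Module.finrank F W = k - 1 →
        Submodule.span F {v : Fin k → F | (∃ j : Fin n, Gᵀ j = v) ∧ v ∈ W} = W := by
  classical
  -- the codeword determined by x evaluates columns through `dotL x`
  have hcw : ∀ (x : Fin k → F) (j : Fin n), G.vecMulLinear x j = dotL x (Gᵀ j) := by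
    intro x j
    simp [Matrix.vecMulLinear_apply, Matrix.vecMul, dotProduct, dotL_apply,
      Matrix.transpose_apply]
  -- injectivity of vecMul from full rank
  have hinj : Function.Injective G.vecMulLinear := by
    have : Function.Injective G.vecMul := by
      rw [Matrix.vecMul_injective_iff, linearIndependent_iff_card_eq_finrank_span]
      rw [Set.finrank, ← Matrix.rank_eq_finrank_span_row, hrank, Fintype.card_fin]
    intro a b hab
    exact this (by simpa [Matrix.vecMulLinear] using hab)
  constructor
  · -- minimal → strong blocking set
    intro hmin W hW
    set S := Submodule.span F {v : Fin k → F | (∃ j : Fin n, Gᵀ j = v) ∧ v ∈ W} with hS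
    have hSW : S ≤ W := Submodule.span_le.mpr fun v hv => hv.2
    refine le_antisymm hSW ?_
    by_contra hn
    have hlt : S < W := lt_of_le_of_ne hSW (fun h => hn (h ▸ le_rfl))
    have hfS : Module.finrank F S < k - 1 := hW ▸ Submodule.finrank_lt_finrank_of_lt hlt
    have hk2 : 2 ≤ k := by omega
    -- a column outside W exists
    obtain ⟨j₀, hj₀⟩ : ∃ j₀ : Fin n, Gᵀ j₀ ∉ W := by
      by_contra h
      push_neg at h
      have hsp : Submodule.span F (Set.range Gᵀ) ≤ W :=
        Submodule.span_le.mpr (by rintro v ⟨j, rfl⟩; exact h j)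
      have h1 : Module.finrank F (Submodule.span F (Set.range Gᵀ)) = k := by
        exact (Matrix.rank_eq_finrank_span_cols G).symm.trans hrank
      have := Submodule.finrank_mono hsp
      rw [h1, hW] at this
      omega
    -- U = S ⊔ span {column j₀} is a proper subspace
    set U := S ⊔ Submodule.span F {Gᵀ j₀} with hUdef
    have hUfr : Module.finrank F U < k := by
      have h1 := Submodule.finrank_add_le_finrank_add_finrank S (Submodule.span F {Gᵀ j₀})
      have h2 : Module.finrank F (Submodule.span F ({Gᵀ j₀} : Set (Fin k → F))) = 1 :=
        finrank_span_singleton (hnondeg j₀)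
      rw [← hUdef] at h1
      omega
    have hUlt : U < ⊤ :=
      Submodule.lt_top_of_finrank_lt_finrank (by rwa [Module.finrank_fin_fun])
    obtain ⟨x', hx'0, hx'ker⟩ := exists_dotL_ker hUlt
    -- W is the kernel of some dotL x
    have hWlt : W < ⊤ :=
      Submodule.lt_top_of_finrank_lt_finrank (by rw [hW, Module.finrank_fin_fun]; omega)
    obtain ⟨x, hx0, hxker⟩ := exists_dotL_ker hWlt
    have hWker : W = LinearMap.ker (dotL x) := by
      refine Submodule.eq_of_le_of_finrank_eq hxker ?_
      rw [hW, finrank_ker_dotL hx0]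
    -- build the two codewords
    set c := G.vecMulLinear x with hc
    set c' := G.vecMulLinear x' with hc'
    have hcne : c ≠ 0 := fun h => hx0 (hinj (by rw [map_zero]; exact h))
    have hc'ne : c' ≠ 0 := fun h => hx'0 (hinj (by rw [map_zero]; exact h))
    have hWmem : ∀ j : Fin n, Gᵀ j ∈ W ↔ c j = 0 := by
      intro j
      rw [hc, hcw x j, hWker, ← LinearMap.mem_ker]
    have hsubset : codeSupp c' ⊂ codeSupp c := by
      constructor
      · intro j hj
        simp only [codeSupp, Set.mem_setOf_eq] at hj ⊢
        intro hcj
        apply hj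
        have hjW : Gᵀ j ∈ W := (hWmem j).mpr hcj
        have hjS : Gᵀ j ∈ S := Submodule.subset_span ⟨⟨j, rfl⟩, hjW⟩
        have hjU : Gᵀ j ∈ U := Submodule.mem_sup_left hjS
        have := hx'ker hjU
        rw [LinearMap.mem_ker] at this
        rw [hc', hcw x' j, this]
      · intro hsub
        have hj₀supp : j₀ ∈ codeSupp c := by
          simp only [codeSupp, Set.mem_setOf_eq]
          intro h
          exact hj₀ ((hWmem j₀).mpr h)
        have := hsub hj₀supp
        simp only [codeSupp, Set.mem_setOf_eq] at this
        apply this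
        have hjU : Gᵀ j₀ ∈ U :=
          Submodule.mem_sup_right (Submodule.mem_span_singleton_self _)
        have := hx'ker hjU
        rw [LinearMap.mem_ker] at this
        rw [hc', hcw x' j₀, this]
    exact hmin c (LinearMap.mem_range_self _ x) hcne c' (LinearMap.mem_range_self _ x') hc'ne hsubset
  · -- strong blocking set → minimal
    intro hsb c hcmem hc0 c' hc'mem hc'0 hsub
    obtain ⟨x, rfl⟩ := hcmem
    obtain ⟨x', rfl⟩ := hc'mem
    have hx0 : x ≠ 0 := fun h => hc0 (by rw [h, map_zero])
    have hx'0 : x' ≠ 0 := fun h => hc'0 (by rw [h, map_zero])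
    set W := LinearMap.ker (dotL x) with hW
    set W' := LinearMap.ker (dotL x') with hW'
    have hWfr : Module.finrank F W = k - 1 := finrank_ker_dotL hx0
    have hW'fr : Module.finrank F W' = k - 1 := finrank_ker_dotL hx'0
    have hWmem : ∀ j : Fin n, Gᵀ j ∈ W ↔ G.vecMulLinear x j = 0 := by
      intro j; rw [hW, LinearMap.mem_ker, hcw x j]
    have hW'mem : ∀ j : Fin n, Gᵀ j ∈ W' ↔ G.vecMulLinear x' j = 0 := by
      intro j; rw [hW', LinearMap.mem_ker, hcw x' j]
    have hspan := hsb W hWfr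
    have hWle : W ≤ W' := by
      rw [← hspan]
      apply Submodule.span_le.mpr
      rintro v ⟨⟨j, rfl⟩, hvW⟩
      rw [SetLike.mem_coe, hW'mem j]
      by_contra h
      have hjsupp : j ∈ codeSupp (G.vecMulLinear x') := h
      have := hsub.1 hjsupp
      simp only [codeSupp, Set.mem_setOf_eq] at this
      exact this ((hWmem j).mp hvW)
    have hWeq : W = W' := Submodule.eq_of_le_of_finrank_eq hWle (by rw [hWfr, hW'fr])
    apply hsub.2
    intro j hj
    simp only [codeSupp, Set.mem_setOf_eq] at hj ⊢
    intro h
    apply hj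
    have hmem : Gᵀ j ∈ W' := (hW'mem j).mpr h
    rw [← hWeq] at hmem
    exact (hWmem j).mp hmem
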